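/- Let ρ_x (x ∈ {0,1}²) be four qubit states and let {M_{0|y}, M_{1|y}} (y ∈ {0,1}) be two binary qubit POVMs whose observables M_y = M_{0|y} − M_{1|y} = c_{y0}𝟙 + c⃗_y·σ⃗ have Bloch vectors of common length η = |c⃗_0| = |c⃗_1|. Then the witness W_AB = (1/8)·Σ_{x,y} tr[ρ_x M_{x_y|y}] satisfies W_AB ≤ 1/2 + η/(2√2); equivalently, η ≥ √2(2·W_AB − 1). Moreover this bound is tight: for every η ∈ [0,1] there exist states and POVMs of sharpness η attaining W_AB = 1/2 + η/(2√2). -/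

import Mathlib

open Matrix ComplexOrder

set_option maxHeartbeats 1000000

noncomputable section

/-- The bit `x_y` of `x = (x₀, x₁)`. -/
def bit (x : Bool × Bool) (y : Bool) : Bool := if y then x.2 else x.1

/-- The Pauli matrices `(σx, σy, σz)`. -/
def pauli : Fin 3 → Matrix (Fin 2) (Fin 2) ℂ :=
  ![!![0, 1; 1, 0], !![0, -Complex.I; Complex.I, 0], !![1, 0; 0, -1]]

/-- The RAC witness `W_AB = (1/8) ∑_{x,y} tr[ρ_x M_{x_y|y}]` for states `ρ`
and POVMs `M`. -/
def WABm (ρ : Bool × Bool → Matrix (Fin 2) (Fin 2) ℂ)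
    (M : Bool → Bool → Matrix (Fin 2) (Fin 2) ℂ) : ℝ :=
  (1 / 8) * ∑ x : Bool × Bool, ∑ y : Bool, ((ρ x * M y (bit x y)).trace).re

/-! ### Auxiliary lemmas -/

lemma entry_facts (A : Matrix (Fin 2) (Fin 2) ℂ) (h : A.PosSemidef) (ht : A.trace = 1) :
    ∃ a d : ℝ, A 0 0 = (a:ℂ) ∧ A 1 1 = (d:ℂ) ∧ A 1 0 = starRingEnd ℂ (A 0 1) ∧
      0 ≤ a ∧ 0 ≤ d ∧ a + d = 1 ∧ Complex.normSq (A 0 1) ≤ a * d := by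
  have h00 := h.dotProduct_mulVec_nonneg (Pi.single 0 1)
  have h11 := h.dotProduct_mulVec_nonneg (Pi.single 1 1)
  simp [dotProduct, Matrix.mulVec, Fin.sum_univ_two, Pi.single, Complex.le_def] at h00 h11
  have hH : A 1 0 = starRingEnd ℂ (A 0 1) := by
    have := congrFun (congrFun h.1 1) 0
    simpa [Matrix.conjTranspose_apply] using this.symm
  set a := (A 0 0).re with ha
  set d := (A 1 1).re with hd
  have hA00 : A 0 0 = (a:ℂ) := by rw [Complex.ext_iff]; simp [← h00.2, ha]
  have hA11 : A 1 1 = (d:ℂ) := by rw [Complex.ext_iff]; simp [← h11.2, hd]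
  have htr : a + d = 1 := by
    have : A.trace = A 0 0 + A 1 1 := by simp [Matrix.trace_fin_two]
    rw [ht, hA00, hA11] at this
    exact_mod_cast congrArg Complex.re this.symm
  refine ⟨a, d, hA00, hA11, hH, h00.1, h11.1, htr, ?_⟩
  set b := A 0 1 with hb
  have q1 := h.dotProduct_mulVec_nonneg ![b, -(a:ℂ)]
  have q2 := h.dotProduct_mulVec_nonneg ![-(d:ℂ), A 1 0]
  rw [Complex.le_def] at q1 q2
  simp [dotProduct, Matrix.mulVec, Fin.sum_univ_two, hA00, hA11, hH] at q1 q2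
  simp only [← hb] at q1 q2
  simp only [Complex.normSq_apply]
  nlinarith [q1.1, q2.1, htr]

lemma cs3 (u0 u1 u2 w0 w1 w2 S : ℝ) (hu : u0^2+u1^2+u2^2 ≤ 1) (hS : 0 ≤ S)
    (hS2 : S^2 = w0^2+w1^2+w2^2) : u0*w0 + u1*w1 + u2*w2 ≤ S := by
  nlinarith [sq_nonneg (u0*w1 - u1*w0), sq_nonneg (u0*w2 - u2*w0), sq_nonneg (u1*w2 - u2*w1),
    sq_nonneg (S - (u0*w0+u1*w1+u2*w2)), sq_nonneg (S + (u0*w0+u1*w1+u2*w2))]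

lemma key (A : Matrix (Fin 2) (Fin 2) ℂ) (h : A.PosSemidef) (ht : A.trace = 1) (w : Fin 3 → ℝ) :
    ((A * (∑ i, ((w i : ℝ):ℂ) • pauli i)).trace).re ≤ Real.sqrt (∑ i : Fin 3, w i ^ 2) := by
  obtain ⟨a, d, hA00, hA11, hH, ha, hd, had, hb⟩ := entry_facts A h ht
  have hlhs : ((A * (∑ i, ((w i : ℝ):ℂ) • pauli i)).trace).re
      = (2*(A 0 1).re)*(w 0) + (-2*(A 0 1).im)*(w 1) + (a-d)*(w 2) := by
    rw [Matrix.trace_fin_two]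
    simp [Matrix.mul_apply, Fin.sum_univ_two, Fin.sum_univ_three, pauli, hA00, hA11, hH,
      Matrix.sum_apply]
    ring
  rw [hlhs]
  have hsum : 0 ≤ ∑ i : Fin 3, w i ^ 2 := by positivity
  refine cs3 _ _ _ _ _ _ _ ?_ (Real.sqrt_nonneg _) ?_
  · rw [Complex.normSq_apply] at hb; nlinarith
  · rw [Real.sq_sqrt hsum, Fin.sum_univ_three]

lemma trace_M (ρ Mf Mt E : Matrix (Fin 2) (Fin 2) ℂ) (htr : ρ.trace = 1)
    (hadd : Mf + Mt = 1) (hsub : Mf - Mt = E) (b : Bool) :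
    ((ρ * (if b then Mt else Mf)).trace).re
      = 1/2 + (if b then (-1:ℝ) else 1)/2 * ((ρ * E).trace).re := by
  have hf : Mf = (2⁻¹:ℂ) • ((Mf + Mt) + (Mf - Mt)) := by module
  have htt : Mt = (2⁻¹:ℂ) • ((Mf + Mt) - (Mf - Mt)) := by module
  cases b <;> simp only [Bool.false_eq_true, if_true, if_false]
  · rw [hf, hadd, hsub, mul_smul_comm, Matrix.trace_smul, mul_add, mul_one, Matrix.trace_add, htr]
    rw [smul_eq_mul, Complex.mul_re]
    norm_num
    ring
  · rw [htt, hadd, hsub, mul_smul_comm, Matrix.trace_smul, mul_sub, mul_one, Matrix.trace_sub, htr]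
    rw [smul_eq_mul, Complex.mul_re]
    norm_num
    ring

lemma trace_E (ρ P : Matrix (Fin 2) (Fin 2) ℂ) (htr : ρ.trace = 1) (c0 : ℝ) :
    ((ρ * (((c0:ℝ):ℂ) • 1 + P)).trace).re = c0 + ((ρ * P).trace).re := by
  rw [mul_add, Matrix.trace_add, mul_smul_comm, mul_one, Matrix.trace_smul, htr]
  simp

lemma part1 (ρ : Bool × Bool → Matrix (Fin 2) (Fin 2) ℂ)
    (M : Bool → Bool → Matrix (Fin 2) (Fin 2) ℂ)
    (c0 : Bool → ℝ) (c : Bool → Fin 3 → ℝ) (η : ℝ)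
    (hρ : ∀ x, (ρ x).PosSemidef ∧ (ρ x).trace = 1)
    (hadd : ∀ y, M y false + M y true = 1)
    (hsub : ∀ y, M y false - M y true =
       ((c0 y : ℝ) : ℂ) • (1 : Matrix (Fin 2) (Fin 2) ℂ) +
         ∑ i : Fin 3, ((c y i : ℝ) : ℂ) • pauli i)
    (hc : ∀ y, Real.sqrt (∑ i : Fin 3, c y i ^ 2) = η) :
    WABm ρ M ≤ 1 / 2 + η / (2 * Real.sqrt 2) ∧
    η ≥ Real.sqrt 2 * (2 * WABm ρ M - 1) := by
  have hη0 : 0 ≤ η := by rw [← hc false]; exact Real.sqrt_nonneg _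
  have hηsq : ∀ y, ∑ i : Fin 3, c y i ^ 2 = η^2 := fun y => by
    rw [← hc y, Real.sq_sqrt (by positivity)]
  set P : Bool → Matrix (Fin 2) (Fin 2) ℂ := fun y => ∑ i, ((c y i : ℝ):ℂ) • pauli i with hPdef
  have hcomb : ∀ (x : Bool × Bool) (σ τ : ℝ),
      σ * ((ρ x * P false).trace).re + τ * ((ρ x * P true).trace).re
        ≤ Real.sqrt (∑ i : Fin 3, (σ * c false i + τ * c true i)^2) := by
    intro x σ τ
    have hkey := key (ρ x) (hρ x).1 (hρ x).2 (fun i => σ * c false i + τ * c true i)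
    have hsum : (∑ i : Fin 3, (((σ * c false i + τ * c true i :ℝ)):ℂ) • pauli i)
        = (σ:ℂ) • P false + (τ:ℂ) • P true := by
      rw [hPdef]
      simp only [Finset.smul_sum, ← Finset.sum_add_distrib]
      refine Finset.sum_congr rfl fun i _ => ?_
      push_cast
      rw [smul_smul, smul_smul, ← add_smul]
    rw [hsum, mul_add, Matrix.trace_add, mul_smul_comm, mul_smul_comm,
      Matrix.trace_smul, Matrix.trace_smul] at hkey
    simpa [Complex.mul_re] using hkey
  have hEq : ∀ (x : Bool × Bool) (y : Bool),
      ((ρ x * M y (bit x y)).trace).re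
        = 1/2 + (if bit x y then (-1:ℝ) else 1)/2
            * (c0 y + ((ρ x * P y).trace).re) := by
    intro x y
    have hif : M y (bit x y) = if bit x y then M y true else M y false := by
      cases (bit x y) <;> rfl
    rw [hif, trace_M (ρ x) (M y false) (M y true) _ (hρ x).2 (hadd y) (hsub y),
      trace_E (ρ x) (P y) (hρ x).2 (c0 y)]
  have m1 := hcomb (false,false) 1 1
  have m2 := hcomb (false,true) 1 (-1)
  have m3 := hcomb (true,false) (-1) 1
  have m4 := hcomb (true,true) (-1) (-1)
  have e3 : (∑ i : Fin 3, ((-1) * c false i + 1 * c true i)^2)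
      = ∑ i : Fin 3, (1 * c false i + (-1) * c true i)^2 :=
    Finset.sum_congr rfl fun i _ => by ring
  have e4 : (∑ i : Fin 3, ((-1) * c false i + (-1) * c true i)^2)
      = ∑ i : Fin 3, (1 * c false i + 1 * c true i)^2 :=
    Finset.sum_congr rfl fun i _ => by ring
  rw [e3] at m3
  rw [e4] at m4
  set Pp := Real.sqrt (∑ i : Fin 3, (1 * c false i + 1 * c true i)^2) with hPp
  set Qq := Real.sqrt (∑ i : Fin 3, (1 * c false i + (-1) * c true i)^2) with hQq
  set r := Real.sqrt 2 with hrdef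
  have hr : r^2 = 2 := Real.sq_sqrt (by norm_num)
  have hr0 : 0 < r := Real.sqrt_pos.2 (by norm_num)
  have hPQ : Pp + Qq ≤ 2*r*η := by
    have hp : Pp^2 = ∑ i : Fin 3, (1 * c false i + 1 * c true i)^2 :=
      Real.sq_sqrt (by positivity)
    have hq : Qq^2 = ∑ i : Fin 3, (1 * c false i + (-1) * c true i)^2 :=
      Real.sq_sqrt (by positivity)
    have hsum : Pp^2 + Qq^2 = 4*η^2 := by
      rw [hp, hq, Fin.sum_univ_three, Fin.sum_univ_three]
      have hf := hηsq false
      have htt := hηsq true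
      rw [Fin.sum_univ_three] at hf htt
      nlinarith [hf, htt]
    nlinarith [sq_nonneg (Pp - Qq), Real.sqrt_nonneg (∑ i : Fin 3, (1 * c false i + 1 * c true i)^2),
      Real.sqrt_nonneg (∑ i : Fin 3, (1 * c false i + (-1) * c true i)^2),
      mul_nonneg (mul_nonneg (by norm_num : (0:ℝ) ≤ 2) hr0.le) hη0]
  have hW1 : WABm ρ M ≤ 1/2 + η/(2*r) := by
    have hexp : WABm ρ M = 1/2
        + (1/16) * ((1 * ((ρ (false,false) * P false).trace).re + 1 * ((ρ (false,false) * P true).trace).re)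
          + (1 * ((ρ (false,true) * P false).trace).re + (-1) * ((ρ (false,true) * P true).trace).re)
          + ((-1) * ((ρ (true,false) * P false).trace).re + 1 * ((ρ (true,false) * P true).trace).re)
          + ((-1) * ((ρ (true,true) * P false).trace).re + (-1) * ((ρ (true,true) * P true).trace).re)) := by
      rw [WABm]
      rw [show (Finset.univ : Finset (Bool × Bool)) = {(false,false),(false,true),(true,false),(true,true)} by decide]
      rw [Finset.sum_insert (by decide), Finset.sum_insert (by decide), Finset.sum_insert (by decide),
        Finset.sum_singleton]
      simp only [Fintype.sum_bool]
      simp only [hEq]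
      simp only [bit]
      norm_num
      ring
    have hdiv : η/(2*r) = 2*r*η/8 := by
      rw [div_eq_div_iff (by positivity) (by norm_num)]
      nlinarith [hr]
    rw [hexp, hdiv]
    linarith [m1, m2, m3, m4, hPQ]
  refine ⟨hW1, ?_⟩
  have hdiv2 : 2*r*(η/(2*r)) = η := by field_simp
  nlinarith [hW1, hdiv2, hr0, mul_pos hr0 hr0]

lemma psd2 (a b d : ℝ) (ha : 0 ≤ a) (hd : 0 ≤ d) (h : b^2 ≤ a*d) :
    (!![((a:ℝ):ℂ), ((b:ℝ):ℂ); ((b:ℝ):ℂ), ((d:ℝ):ℂ)]).PosSemidef := by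
  refine Matrix.posSemidef_iff_dotProduct_mulVec.mpr ⟨?_, ?_⟩
  · ext i j
    fin_cases i <;> fin_cases j <;>
      simp [Matrix.conjTranspose_apply, Complex.ext_iff]
  · intro v
    rw [Complex.le_def]
    simp only [dotProduct, Matrix.mulVec, Fin.sum_univ_two, Pi.star_apply,
      Matrix.cons_val', Matrix.cons_val_zero, Matrix.cons_val_one, Matrix.head_cons,
      Matrix.empty_val', Matrix.cons_val_fin_one, Matrix.head_fin_const, Matrix.of_apply,
      RCLike.star_def, Complex.add_re, Complex.add_im, Complex.mul_re, Complex.mul_im,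
      Complex.ofReal_re, Complex.ofReal_im, Complex.conj_re, Complex.conj_im,
      Complex.zero_re, Complex.zero_im]
    constructor
    · rcases eq_or_lt_of_le ha with h0 | h0
      · have hb : b = 0 := by nlinarith
        subst hb
        rw [← h0]
        nlinarith [sq_nonneg (v 1).re, sq_nonneg (v 1).im, hd]
      · nlinarith [sq_nonneg (a*(v 0).re + b*(v 1).re), sq_nonneg (a*(v 0).im + b*(v 1).im),
          mul_nonneg (sub_nonneg.2 h) (add_nonneg (sq_nonneg (v 1).re) (sq_nonneg (v 1).im)), h0]
    · ring

def sg (b : Bool) : ℝ := if b then -1 else 1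

lemma part2 (η : ℝ) (hη : η ∈ Set.Icc (0:ℝ) 1) :
    ∃ (ρ : Bool × Bool → Matrix (Fin 2) (Fin 2) ℂ)
      (M : Bool → Bool → Matrix (Fin 2) (Fin 2) ℂ)
      (c0 : Bool → ℝ) (c : Bool → Fin 3 → ℝ),
      (∀ x, (ρ x).PosSemidef ∧ (ρ x).trace = 1) ∧
      (∀ y b, (M y b).PosSemidef) ∧
      (∀ y, M y false + M y true = 1) ∧
      (∀ y, M y false - M y true =
         ((c0 y : ℝ) : ℂ) • (1 : Matrix (Fin 2) (Fin 2) ℂ) +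
           ∑ i : Fin 3, ((c y i : ℝ) : ℂ) • pauli i) ∧
      (∀ y, Real.sqrt (∑ i : Fin 3, c y i ^ 2) = η) ∧
      WABm ρ M = 1 / 2 + η / (2 * Real.sqrt 2) := by
  obtain ⟨hη0, hη1⟩ := hη
  set q := Real.sqrt 2 with hqdef
  have hq2 : q^2 = 2 := Real.sq_sqrt (by norm_num)
  have hq0 : 0 < q := Real.sqrt_pos.2 (by norm_num)
  have hq1 : 1 < q := by nlinarith
  clear_value q
  refine ⟨fun x => !![((((1 + sg x.2 / q)/2 : ℝ)):ℂ), (((sg x.1/(2*q) : ℝ)):ℂ);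
                    (((sg x.1/(2*q) : ℝ)):ℂ), ((((1 - sg x.2 / q)/2 : ℝ)):ℂ)],
          fun y b => if y then !![((((1 + sg b * η)/2 : ℝ)):ℂ), (((0:ℝ)):ℂ);
                                  (((0:ℝ)):ℂ), ((((1 - sg b * η)/2 : ℝ)):ℂ)]
                          else !![((((1:ℝ)/2 : ℝ)):ℂ), (((sg b * η/2 : ℝ)):ℂ);
                                  (((sg b * η/2 : ℝ)):ℂ), ((((1:ℝ)/2 : ℝ)):ℂ)],
          fun _ => 0,
          fun y i => if y then (if i = 2 then η else 0) else (if i = 0 then η else 0),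
          ?_, ?_, ?_, ?_, ?_, ?_⟩
  · intro x
    have hs : sg x.1 ^ 2 = 1 := by cases x.1 <;> simp [sg]
    have hs2 : sg x.2 ^ 2 = 1 := by cases x.2 <;> simp [sg]
    have habs : |sg x.2| ≤ 1 := by cases x.2 <;> simp [sg]
    have hdle : sg x.2 / q ≤ 1 := by
      rw [div_le_one hq0]; linarith [abs_le.1 habs]
    have hdge : -1 ≤ sg x.2 / q := by
      rw [le_div_iff₀ hq0]; nlinarith [abs_le.1 habs]
    constructor
    · apply psd2
      · linarith
      · linarith
      · have : (sg x.1/(2*q))^2 = 1/8 := by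
          rw [div_pow, hs]; rw [mul_pow, hq2]; norm_num
        rw [this]
        have : (1 + sg x.2 / q)/2 * ((1 - sg x.2 / q)/2) = 1/8 := by
          field_simp
          nlinarith [hs2, hq2]
        rw [this]
    · rw [Matrix.trace_fin_two]
      simp only [Matrix.cons_val', Matrix.cons_val_zero, Matrix.cons_val_one, Matrix.head_cons,
        Matrix.empty_val', Matrix.cons_val_fin_one, Matrix.head_fin_const, Matrix.of_apply]
      push_cast
      ring
  · intro y b
    cases y <;> simp only [Bool.false_eq_true, if_true, if_false]
    · apply psd2 <;> nlinarith [sq_abs (sg b * η), abs_le.1 (show |sg b * η| ≤ 1 by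
        cases b <;> simp [sg, abs_le] <;> constructor <;> linarith)]
    · apply psd2
      · nlinarith [abs_le.1 (show |sg b * η| ≤ 1 by cases b <;> simp [sg, abs_le] <;> constructor <;> linarith)]
      · nlinarith [abs_le.1 (show |sg b * η| ≤ 1 by cases b <;> simp [sg, abs_le] <;> constructor <;> linarith)]
      · nlinarith [abs_le.1 (show |sg b * η| ≤ 1 by cases b <;> simp [sg, abs_le] <;> constructor <;> linarith)]
  · intro y
    cases y <;> ext i j <;> fin_cases i <;> fin_cases j <;>
      simp [sg, Matrix.one_apply, Complex.ext_iff] <;> push_cast <;> ring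
  · intro y
    cases y <;> ext i j <;> fin_cases i <;> fin_cases j <;>
      simp [sg, pauli, Fin.sum_univ_three, Matrix.one_apply, Matrix.sum_apply, Complex.ext_iff] <;>
      push_cast <;> ring
  · intro y
    cases y <;>
    · rw [Fin.sum_univ_three]
      simp
      exact Real.sqrt_sq hη0
  · rw [WABm]
    rw [show (Finset.univ : Finset (Bool × Bool)) = {(false,false),(false,true),(true,false),(true,true)} by decide]
    rw [Finset.sum_insert (by decide), Finset.sum_insert (by decide), Finset.sum_insert (by decide),
      Finset.sum_singleton]
    simp only [Fintype.sum_bool, bit]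
    rw [Matrix.trace_fin_two, Matrix.trace_fin_two, Matrix.trace_fin_two, Matrix.trace_fin_two,
      Matrix.trace_fin_two, Matrix.trace_fin_two, Matrix.trace_fin_two, Matrix.trace_fin_two]
    simp only [Matrix.mul_apply, Fin.sum_univ_two, Matrix.cons_val', Matrix.cons_val_zero,
      Matrix.cons_val_one, Matrix.head_cons, Matrix.empty_val', Matrix.cons_val_fin_one,
      Matrix.head_fin_const, Matrix.of_apply, if_true, if_false, Bool.false_eq_true, sg,
      Complex.add_re, Complex.mul_re, Complex.ofReal_re, Complex.ofReal_im]
    norm_num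
    have hqi : q⁻¹ = q / 2 := by
      field_simp
      linear_combination -hq2
    have hn1 : -1 / q = -(q/2) := by
      rw [neg_div, one_div, hqi]
    have hn2 : -1 / (2*q) = -(q/4) := by
      field_simp
      linear_combination 2*hq2
    have hrhs : η / (2*q) = η*q/4 := by
      rw [div_eq_div_iff (by positivity) (by norm_num)]
      linear_combination -2*η*hq2
    have hp1 : 1 + q⁻¹ = 1 + q / 2 := by rw [hqi]
    simp only [hqi, hn1, hn2, hrhs]
    linear_combination 0*η*hq2

/-- Sharpness lower bound from `W_AB`: for any qubit states and binary qubit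
POVMs whose observables have Bloch vectors of common length `η`, one has
`W_AB ≤ 1/2 + η/(2√2)`, i.e. `η ≥ √2(2W_AB − 1)`; moreover for every
`η ∈ [0,1]` the bound is attained. -/
theorem sharpness_lower_bound :
    (∀ (ρ : Bool × Bool → Matrix (Fin 2) (Fin 2) ℂ)
       (M : Bool → Bool → Matrix (Fin 2) (Fin 2) ℂ)
       (c0 : Bool → ℝ) (c : Bool → Fin 3 → ℝ) (η : ℝ),
       (∀ x, (ρ x).PosSemidef ∧ (ρ x).trace = 1) →
       (∀ y b, (M y b).PosSemidef) →
       (∀ y, M y false + M y true = 1) →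
       (∀ y, M y false - M y true =
          ((c0 y : ℝ) : ℂ) • (1 : Matrix (Fin 2) (Fin 2) ℂ) +
            ∑ i : Fin 3, ((c y i : ℝ) : ℂ) • pauli i) →
       (∀ y, Real.sqrt (∑ i : Fin 3, c y i ^ 2) = η) →
       WABm ρ M ≤ 1 / 2 + η / (2 * Real.sqrt 2) ∧
       η ≥ Real.sqrt 2 * (2 * WABm ρ M - 1)) ∧
    (∀ η ∈ Set.Icc (0 : ℝ) 1,
      ∃ (ρ : Bool × Bool → Matrix (Fin 2) (Fin 2) ℂ)
        (M : Bool → Bool → Matrix (Fin 2) (Fin 2) ℂ)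
        (c0 : Bool → ℝ) (c : Bool → Fin 3 → ℝ),
        (∀ x, (ρ x).PosSemidef ∧ (ρ x).trace = 1) ∧
        (∀ y b, (M y b).PosSemidef) ∧
        (∀ y, M y false + M y true = 1) ∧
        (∀ y, M y false - M y true =
           ((c0 y : ℝ) : ℂ) • (1 : Matrix (Fin 2) (Fin 2) ℂ) +
             ∑ i : Fin 3, ((c y i : ℝ) : ℂ) • pauli i) ∧
        (∀ y, Real.sqrt (∑ i : Fin 3, c y i ^ 2) = η) ∧
        WABm ρ M = 1 / 2 + η / (2 * Real.sqrt 2)) := by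
  exact ⟨fun ρ M c0 c η hρ hM hadd hsub hc => part1 ρ M c0 c η hρ hadd hsub hc,
         fun η hη => part2 η hη⟩

end
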